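/- For every n ≥ 1 and every (i₁,…,iₙ) ∈ {0,1}ⁿ, the matrix M = V·F_{i₁}(e,12,e)⋯F_{iₙ}(e,12,e) has second column (1,1,0)ᵀ, and each of its first and third columns has its second entry equal to its third entry. Consequently the Farey subtriangle Δ_{(e,12,e)}(i₁,…,iₙ) has (1,0) as a vertex and its other two vertices lie on the segment from (0,0) to (1,1); i.e. the (e,(12),e) TRIP map is degenerate, fixing the vertex (1,0) and only partitioning the opposite side of the triangle. -/

import Mathlib

open Matrix MeasureTheory Filter

noncomputable section

/-- Projection π(a,b,c) = (b/a, c/a). -/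
def projPt (v : Fin 3 → ℝ) : ℝ × ℝ := (v 1 / v 0, v 2 / v 0)

def Vmat : Matrix (Fin 3) (Fin 3) ℝ := !![1,1,1; 0,1,1; 0,0,1]

def prodSeq (C : Fin 2 → Matrix (Fin 3) (Fin 3) ℝ) (i : ℕ → Fin 2) :
    ℕ → Matrix (Fin 3) (Fin 3) ℝ
  | 0 => 1
  | n + 1 => prodSeq C i n * C (i (n + 1))

/-- The Farey matrices F₀(e,12,e), F₁(e,12,e). -/
def Fe12e : Fin 2 → Matrix (Fin 3) (Fin 3) ℝ :=
  ![!![0,0,1; 0,1,0; 1,0,1], !![1,0,1; 0,1,0; 0,0,1]]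

lemma Fe0 : Fe12e 0 = !![0,0,1; 0,1,0; 1,0,1] := rfl
lemma Fe1 : Fe12e 1 = !![1,0,1; 0,1,0; 0,0,1] := rfl

lemma auxinv (i : ℕ → Fin 2) : ∀ n, 1 ≤ n →
    ((Vmat * prodSeq Fe12e i n) 0 1 = 1 ∧
     (Vmat * prodSeq Fe12e i n) 1 1 = 1 ∧
     (Vmat * prodSeq Fe12e i n) 2 1 = 0) ∧
    ((Vmat * prodSeq Fe12e i n) 1 0 = (Vmat * prodSeq Fe12e i n) 2 0 ∧
     (Vmat * prodSeq Fe12e i n) 1 2 = (Vmat * prodSeq Fe12e i n) 2 2) ∧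
    (0 < (Vmat * prodSeq Fe12e i n) 0 0 ∧
     0 ≤ (Vmat * prodSeq Fe12e i n) 1 0 ∧
     (Vmat * prodSeq Fe12e i n) 1 0 ≤ (Vmat * prodSeq Fe12e i n) 0 0) ∧
    (0 < (Vmat * prodSeq Fe12e i n) 0 2 ∧
     0 ≤ (Vmat * prodSeq Fe12e i n) 1 2 ∧
     (Vmat * prodSeq Fe12e i n) 1 2 ≤ (Vmat * prodSeq Fe12e i n) 0 2) := by
  intro n
  induction n with
  | zero => intro h; omega
  | succ m ih =>
    intro _
    rcases Nat.eq_zero_or_pos m with hm | hm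
    · subst hm
      have h : i 1 = 0 ∨ i 1 = 1 := by omega
      have hp : prodSeq Fe12e i 1 = Fe12e (i 1) := by
        rw [prodSeq, prodSeq, Matrix.one_mul]
      rcases h with h | h <;>
        rw [h] at hp <;>
        norm_num [hp, Fe0, Fe1, Vmat, Matrix.mul_apply, Fin.sum_univ_three,
          Matrix.vecHead, Matrix.vecTail, Matrix.cons_val_two, Matrix.cons_val_one,
          Matrix.cons_val_zero]
    · obtain ⟨⟨h01, h11, h21⟩, ⟨e0, e2⟩, ⟨p00, p10, p10'⟩, ⟨p02, p12, p12'⟩⟩ := ih hm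
      set M := Vmat * prodSeq Fe12e i m with hMdef
      have hM : Vmat * prodSeq Fe12e i (m+1) = M * Fe12e (i (m+1)) := by
        rw [hMdef, prodSeq, Matrix.mul_assoc]
      have h : i (m+1) = 0 ∨ i (m+1) = 1 := by omega
      have E : ∀ (k j : Fin 3), (Vmat * prodSeq Fe12e i (m+1)) k j
          = M k 0 * Fe12e (i (m+1)) 0 j + M k 1 * Fe12e (i (m+1)) 1 j
            + M k 2 * Fe12e (i (m+1)) 2 j := by
        intro k j; rw [hM, Matrix.mul_apply, Fin.sum_univ_three]
      rcases h with h | h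
      · simp only [E, h, show Fe12e 0 0 0 = (0:ℝ) from rfl, show Fe12e 0 0 1 = (0:ℝ) from rfl, show Fe12e 0 0 2 = (1:ℝ) from rfl, show Fe12e 0 1 0 = (0:ℝ) from rfl, show Fe12e 0 1 1 = (1:ℝ) from rfl, show Fe12e 0 1 2 = (0:ℝ) from rfl, show Fe12e 0 2 0 = (1:ℝ) from rfl, show Fe12e 0 2 1 = (0:ℝ) from rfl, show Fe12e 0 2 2 = (1:ℝ) from rfl]
        refine ⟨⟨by linarith, by linarith, by linarith⟩, ⟨by linarith, by linarith⟩,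
          ⟨by linarith, by linarith, by linarith⟩, by linarith, by linarith, by linarith⟩
      · simp only [E, h, show Fe12e 1 0 0 = (1:ℝ) from rfl, show Fe12e 1 0 1 = (0:ℝ) from rfl, show Fe12e 1 0 2 = (1:ℝ) from rfl, show Fe12e 1 1 0 = (0:ℝ) from rfl, show Fe12e 1 1 1 = (1:ℝ) from rfl, show Fe12e 1 1 2 = (0:ℝ) from rfl, show Fe12e 1 2 0 = (0:ℝ) from rfl, show Fe12e 1 2 1 = (0:ℝ) from rfl, show Fe12e 1 2 2 = (1:ℝ) from rfl]
        refine ⟨⟨by linarith, by linarith, by linarith⟩, ⟨by linarith, by linarith⟩,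
          ⟨by linarith, by linarith, by linarith⟩, by linarith, by linarith, by linarith⟩

lemma seg_mem (t : ℝ) (h0 : 0 ≤ t) (h1 : t ≤ 1) :
    ((t, t) : ℝ × ℝ) ∈ segment ℝ ((0 : ℝ), (0 : ℝ)) ((1 : ℝ), (1 : ℝ)) := by
  refine ⟨1 - t, t, by linarith, h0, by ring, ?_⟩
  simp [Prod.ext_iff]


/-- The matrix M = V·F_{i₁}(e,12,e)⋯F_{iₙ}(e,12,e) has second column (1,1,0)ᵀ, and its
first and third columns each have second entry equal to third entry.  Hence the Farey
subtriangle Δ_{(e,12,e)}(i₁,…,iₙ) has the vertex (1,0), and its two other vertices lie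
on the segment from (0,0) to (1,1): the (e,12,e) TRIP map is degenerate. -/
theorem stmt10 (i : ℕ → Fin 2) (n : ℕ) (hn : 1 ≤ n) :
    (Vmat * prodSeq Fe12e i n) 0 1 = 1 ∧
    (Vmat * prodSeq Fe12e i n) 1 1 = 1 ∧
    (Vmat * prodSeq Fe12e i n) 2 1 = 0 ∧
    (Vmat * prodSeq Fe12e i n) 1 0 = (Vmat * prodSeq Fe12e i n) 2 0 ∧
    (Vmat * prodSeq Fe12e i n) 1 2 = (Vmat * prodSeq Fe12e i n) 2 2 ∧
    projPt (fun k => (Vmat * prodSeq Fe12e i n) k 1) = ((1 : ℝ), (0 : ℝ)) ∧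
    projPt (fun k => (Vmat * prodSeq Fe12e i n) k 0)
      ∈ segment ℝ ((0 : ℝ), (0 : ℝ)) ((1 : ℝ), (1 : ℝ)) ∧
    projPt (fun k => (Vmat * prodSeq Fe12e i n) k 2)
      ∈ segment ℝ ((0 : ℝ), (0 : ℝ)) ((1 : ℝ), (1 : ℝ)) := by
  obtain ⟨⟨h01, h11, h21⟩, ⟨e0, e2⟩, ⟨p00, p10, p10'⟩, ⟨p02, p12, p12'⟩⟩ := auxinv i n hn
  refine ⟨h01, h11, h21, e0, e2, ?_, ?_, ?_⟩
  · simp [projPt, h01, h11, h21]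
  · have : projPt (fun k => (Vmat * prodSeq Fe12e i n) k 0)
        = ((Vmat * prodSeq Fe12e i n) 1 0 / (Vmat * prodSeq Fe12e i n) 0 0,
           (Vmat * prodSeq Fe12e i n) 1 0 / (Vmat * prodSeq Fe12e i n) 0 0) := by
      simp [projPt, e0]
    rw [this]
    exact seg_mem _ (div_nonneg p10 p00.le) ((div_le_one p00).mpr p10')
  · have : projPt (fun k => (Vmat * prodSeq Fe12e i n) k 2)
        = ((Vmat * prodSeq Fe12e i n) 1 2 / (Vmat * prodSeq Fe12e i n) 0 2,
           (Vmat * prodSeq Fe12e i n) 1 2 / (Vmat * prodSeq Fe12e i n) 0 2) := by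
      simp [projPt, e2]
    rw [this]
    exact seg_mem _ (div_nonneg p12 p02.le) ((div_le_one p02).mpr p12')
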